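/- Let α > 0, γ = 0, and r₀ > 0. The function U(x,t) = 4 arctan( y + √(y² + 1) ) with y = r₀ e^{−(x−t)/α} satisfies the damped sine-Gordon equation U_xx − U_tt − α U_t = sin U on ℝ². -/

import Mathlib

open Real

private lemma arctan_shift (y : ℝ) :
    Real.arctan (y + Real.sqrt (y ^ 2 + 1)) = π / 4 + Real.arctan y / 2 := by
  have hsq_pos : 0 < Real.sqrt (1 + y ^ 2) := Real.sqrt_pos.2 (by positivity)
  have hsq : Real.sqrt (1 + y ^ 2) ^ 2 = 1 + y ^ 2 := Real.sq_sqrt (by positivity)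
  have hcomm : Real.sqrt (y ^ 2 + 1) = Real.sqrt (1 + y ^ 2) := by rw [add_comm]
  set θ := Real.arctan y with hθ
  have hθ1 : -(π / 2) < θ := Real.neg_pi_div_two_lt_arctan y
  have hθ2 : θ < π / 2 := Real.arctan_lt_pi_div_two y
  set ψ := π / 4 + θ / 2 with hψ
  have hπ : 0 < π := Real.pi_pos
  have hψ1 : 0 < ψ := by rw [hψ]; linarith
  have hψ2 : ψ < π / 2 := by rw [hψ]; linarith
  have hcosψ : 0 < Real.cos ψ := Real.cos_pos_of_mem_Ioo ⟨by linarith, hψ2⟩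
  have hψ3 : ψ < π := lt_trans hψ2 (by linarith)
  have hsinψ : 0 < Real.sin ψ := Real.sin_pos_of_pos_of_lt_pi hψ1 hψ3
  have h2ψ : 2 * ψ = π / 2 + θ := by rw [hψ]; ring
  have hsθ : Real.sin θ = y / Real.sqrt (1 + y ^ 2) := Real.sin_arctan y
  have hcθ : Real.cos θ = 1 / Real.sqrt (1 + y ^ 2) := Real.cos_arctan y
  have halg : 1 + Real.sin θ = (y + Real.sqrt (y ^ 2 + 1)) * Real.cos θ := by
    rw [hsθ, hcθ, hcomm]
    field_simp
    ring
  have hcos2ψ : Real.cos (2 * ψ) = -Real.sin θ := by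
    rw [h2ψ, Real.cos_add]; simp
  have hsin2ψ : Real.sin (2 * ψ) = Real.cos θ := by
    rw [h2ψ, Real.sin_add]; simp
  have hsinsq : Real.sin ψ ^ 2 = (1 + Real.sin θ) / 2 := by
    have h1 : Real.sin ψ ^ 2 = 1 - Real.cos ψ ^ 2 := (Real.sin_sq ψ)
    have h2 : Real.cos ψ ^ 2 = 1 / 2 + Real.cos (2 * ψ) / 2 := Real.cos_sq ψ
    rw [h1, h2, hcos2ψ]; ring
  have hsc : Real.sin ψ * Real.cos ψ = Real.cos θ / 2 := by
    have := Real.sin_two_mul ψ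
    rw [hsin2ψ] at this; linarith
  have hkey : Real.sin ψ = (y + Real.sqrt (y ^ 2 + 1)) * Real.cos ψ := by
    have h : Real.sin ψ * Real.sin ψ =
        ((y + Real.sqrt (y ^ 2 + 1)) * Real.cos ψ) * Real.sin ψ := by
      have : Real.sin ψ ^ 2 = (y + Real.sqrt (y ^ 2 + 1)) * (Real.sin ψ * Real.cos ψ) := by
        rw [hsinsq, hsc, halg]; ring
      nlinarith [this]
    exact mul_right_cancel₀ (ne_of_gt hsinψ) h
  have htan : Real.tan ψ = y + Real.sqrt (y ^ 2 + 1) := by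
    rw [Real.tan_eq_sin_div_cos, hkey]
    field_simp
  calc Real.arctan (y + Real.sqrt (y ^ 2 + 1)) = Real.arctan (Real.tan ψ) := by rw [htan]
    _ = ψ := Real.arctan_tan (by linarith) hψ2

private noncomputable def Fwave (α r₀ : ℝ) (u : ℝ) : ℝ :=
  π + 2 * Real.arctan (r₀ * Real.exp (u / α))

private noncomputable def Fwave' (α r₀ : ℝ) (u : ℝ) : ℝ :=
  2 * (r₀ * Real.exp (u / α) / α) / (1 + (r₀ * Real.exp (u / α)) ^ 2)

private lemma hasDerivAt_Fwave (α r₀ : ℝ) (u : ℝ) :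
    HasDerivAt (Fwave α r₀) (Fwave' α r₀ u) u := by
  have h1 : HasDerivAt (fun v : ℝ => v / α) (1 / α) u := by
    simpa using (hasDerivAt_id u).div_const α
  have h2 : HasDerivAt (fun v : ℝ => Real.exp (v / α)) (Real.exp (u / α) * (1 / α)) u :=
    h1.exp
  have h3 : HasDerivAt (fun v : ℝ => r₀ * Real.exp (v / α))
      (r₀ * (Real.exp (u / α) * (1 / α))) u := h2.const_mul r₀
  have h4 : HasDerivAt (fun v : ℝ => Real.arctan (r₀ * Real.exp (v / α)))
      ((1 / (1 + (r₀ * Real.exp (u / α)) ^ 2)) * (r₀ * (Real.exp (u / α) * (1 / α)))) u :=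
    h3.arctan
  have h5 := (h4.const_mul 2).const_add π
  have : π + 2 * Real.arctan (r₀ * Real.exp (u / α)) = Fwave α r₀ u := rfl
  refine h5.congr_deriv ?_
  unfold Fwave'
  ring

private lemma diff_Fwave' (α r₀ : ℝ) (u : ℝ) :
    DifferentiableAt ℝ (Fwave' α r₀) u := by
  have hz : DifferentiableAt ℝ (fun v : ℝ => r₀ * Real.exp (v / α)) u := by
    fun_prop
  have hnum : DifferentiableAt ℝ (fun v : ℝ => 2 * (r₀ * Real.exp (v / α) / α)) u := by
    fun_prop
  have hden : DifferentiableAt ℝ (fun v : ℝ => 1 + (r₀ * Real.exp (v / α)) ^ 2) u := by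
    fun_prop
  have hne : (1 + (r₀ * Real.exp (u / α)) ^ 2) ≠ 0 := by positivity
  exact hnum.div hden hne

/-- The traveling wave `U(x,t) = 4 arctan (y + √(y²+1))`, `y = r₀ e^{-(x-t)/α}`,
solves the damped sine-Gordon equation `U_xx - U_tt - α U_t = sin U` on `ℝ²`. -/
theorem traveling_wave_damped_sine_gordon (α r₀ : ℝ) (hα : 0 < α) (hr₀ : 0 < r₀)
    (U : ℝ → ℝ → ℝ)
    (hU : ∀ x t, U x t =
      4 * Real.arctan (r₀ * Real.exp (-(x - t) / α) +
        Real.sqrt ((r₀ * Real.exp (-(x - t) / α)) ^ 2 + 1))) :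
    ∀ x t : ℝ,
      deriv (fun x' => deriv (fun x'' => U x'' t) x') x -
        deriv (fun t' => deriv (fun t'' => U x t'') t') t -
        α * deriv (fun t' => U x t') t = Real.sin (U x t) := by
  intro x t
  have hUF : ∀ x' t' : ℝ, U x' t' = Fwave α r₀ (t' - x') := by
    intro x' t'
    rw [hU, arctan_shift]
    unfold Fwave
    rw [show -(x' - t') = t' - x' by ring]
    ring
  -- derivative in t
  have ht : ∀ x' t' : ℝ, HasDerivAt (fun t'' => U x' t'') (Fwave' α r₀ (t' - x')) t' := by
    intro x' t'
    have heq : (fun t'' => U x' t'') = fun t'' => Fwave α r₀ (t'' - x') :=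
      funext fun t'' => hUF x' t''
    rw [heq]
    have h0 : HasDerivAt (fun t'' : ℝ => t'' - x') 1 t' := by
      simpa using (hasDerivAt_id t').sub_const x'
    simpa [Function.comp_def] using (hasDerivAt_Fwave α r₀ (t' - x')).comp t' h0
  -- derivative in x
  have hx : ∀ x' t' : ℝ, HasDerivAt (fun x'' => U x'' t') (-Fwave' α r₀ (t' - x')) x' := by
    intro x' t'
    have heq : (fun x'' => U x'' t') = fun x'' => Fwave α r₀ (t' - x'') :=
      funext fun x'' => hUF x'' t'
    rw [heq]
    have h0 : HasDerivAt (fun x'' : ℝ => t' - x'') (-1) x' := by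
      simpa using (hasDerivAt_id x').const_sub t'
    have := (hasDerivAt_Fwave α r₀ (t' - x')).comp x' h0
    simpa [Function.comp_def] using this
  have hDdiff := diff_Fwave' α r₀ (t - x)
  set D := deriv (Fwave' α r₀) (t - x) with hD
  have hDd : HasDerivAt (Fwave' α r₀) D (t - x) := hDdiff.hasDerivAt
  -- second derivative in x
  have hxx : deriv (fun x' => deriv (fun x'' => U x'' t) x') x = D := by
    have heq : (fun x' => deriv (fun x'' => U x'' t) x') = fun x' => -Fwave' α r₀ (t - x') :=
      funext fun x' => (hx x' t).deriv
    rw [heq]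
    have h0 : HasDerivAt (fun x' : ℝ => t - x') (-1) x := by
      simpa using (hasDerivAt_id x).const_sub t
    have h1 := (hDd.comp x h0).neg
    have h2 : -(D * (-1)) = D := by ring
    rw [h2] at h1
    exact h1.deriv
  -- second derivative in t
  have htt : deriv (fun t' => deriv (fun t'' => U x t'') t') t = D := by
    have heq : (fun t' => deriv (fun t'' => U x t'') t') = fun t' => Fwave' α r₀ (t' - x) :=
      funext fun t' => (ht x t').deriv
    rw [heq]
    have h0 : HasDerivAt (fun t' : ℝ => t' - x) 1 t := by
      simpa using (hasDerivAt_id t).sub_const x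
    have h1 := hDd.comp t h0
    simpa [Function.comp_def] using h1.deriv
  have ht1 : deriv (fun t' => U x t') t = Fwave' α r₀ (t - x) := (ht x t).deriv
  rw [hxx, htt, ht1, hUF x t]
  -- now arithmetic: -α * Fwave' = sin (Fwave)
  set z := r₀ * Real.exp ((t - x) / α) with hz
  have hzpos : 0 < z := by positivity
  have hden : (0:ℝ) < 1 + z ^ 2 := by positivity
  have hsq_pos : 0 < Real.sqrt (1 + z ^ 2) := Real.sqrt_pos.2 hden
  have hsq : Real.sqrt (1 + z ^ 2) ^ 2 = 1 + z ^ 2 := Real.sq_sqrt hden.le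
  have hsin : Real.sin (Fwave α r₀ (t - x)) = -(2 * z / (1 + z ^ 2)) := by
    unfold Fwave
    rw [← hz, show π + 2 * Real.arctan z = 2 * Real.arctan z + π by ring, Real.sin_add_pi,
      Real.sin_two_mul, Real.sin_arctan, Real.cos_arctan]
    have hms : Real.sqrt (1 + z ^ 2) * Real.sqrt (1 + z ^ 2) = 1 + z ^ 2 :=
      Real.mul_self_sqrt hden.le
    have h : 2 * (z / Real.sqrt (1 + z ^ 2)) * (1 / Real.sqrt (1 + z ^ 2)) =
        2 * z / (Real.sqrt (1 + z ^ 2) * Real.sqrt (1 + z ^ 2)) := by ring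
    rw [h, hms]
  rw [hsin]
  have hα' : α ≠ 0 := ne_of_gt hα
  unfold Fwave'
  rw [← hz]
  field_simp
  ring
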